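/- Let P be a finite poset with a zipper (x,y,z) and let P' be the zipped poset with new element xy. If a ⪯ xy in P', then the Möbius function satisfies μ_{P'}(a, xy) = μ_P(a, x) = μ_P(a, y). Moreover, if a ⪯ b in P' with a ≠ xy, then μ_{P'}(a,b) = μ_P(a,b) (where elements other than xy are identified with their counterparts in P, and intervals containing xy are interpreted via the zipping). -/

import Mathlib

/-- The underlying set of the zipped poset `P' = (P − {x,y,z}) ∪ {xy}`:
elements of `P` other than `x`, `y`, `z`, together with one new element `xy`
(represented by `Sum.inr ()`). -/
def ZipCarrier (α : Type*) (x y z : α) : Type _ :=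
  {p : α // p ≠ x ∧ p ≠ y ∧ p ≠ z} ⊕ Unit

/-- The order relation `⪯` on the zipped poset: `a ⪯ b` if `a ≤ b` in `P`;
`xy ⪯ a` if `x ≤ a` or `y ≤ a`; `a ⪯ xy` if `a ≤ x`; and `xy ⪯ xy`. -/
def zipLE {α : Type*} [PartialOrder α] (x y z : α) :
    ZipCarrier α x y z → ZipCarrier α x y z → Prop
  | .inl a, .inl b => a.val ≤ b.val
  | .inr _, .inl b => x ≤ b.val ∨ y ≤ b.val
  | .inl a, .inr _ => a.val ≤ x
  | .inr _, .inr _ => True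

/-- `(x,y,z)` is a zipper in `P`: `z` covers `x` and `y` and covers no other element,
`z = x ∨ y` (the join), and the sets of elements strictly below `x` and `y` agree. -/
def IsZipper {α : Type*} [PartialOrder α] (x y z : α) : Prop :=
  x ≠ y ∧ x ≠ z ∧ y ≠ z ∧
  (x ⋖ z) ∧ (y ⋖ z) ∧ (∀ w : α, w ⋖ z → w = x ∨ w = y) ∧
  IsLUB {x, y} z ∧
  (∀ a : α, a < x ↔ a < y)

open scoped Classical in
/-- `μ` is the Möbius function of the relation `r`:
`∑_{c : r a c ∧ r c b} μ(a,c) = δ_{a,b}` for all `a ≤ b`. -/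
noncomputable def IsMoebius {α : Type*} (r : α → α → Prop) (μ : α → α → ℤ) : Prop :=
  ∀ a b : α, r a b →
    (∑ᶠ c ∈ {c : α | r a c ∧ r c b}, μ a c) = if a = b then 1 else 0

open scoped Classical

lemma zipped_moeb_sum {β : Type*} [Fintype β] (r : β → β → Prop) (μ : β → β → ℤ)
    (h : IsMoebius r μ) (a b : β) (hab : r a b) :
    ∑ c ∈ Finset.univ.filter (fun c => r a c ∧ r c b), μ a c = if a = b then 1 else 0 := by
  have h2 := h a b hab
  have hs : {c : β | r a c ∧ r c b} = ↑(Finset.univ.filter (fun c => r a c ∧ r c b)) := by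
    ext c; simp
  rw [hs, finsum_mem_coe_finset] at h2
  exact h2

noncomputable instance zipFintype {α : Type*} [Fintype α] (x y z : α) :
    Fintype (ZipCarrier α x y z) :=
  inferInstanceAs (Fintype ({p : α // p ≠ x ∧ p ≠ y ∧ p ≠ z} ⊕ Unit))

/-- for a zipper `(x,y,z)` in a finite poset `P` with zipped poset `P'`:
if `a ⪯ xy` then `μ_{P'}(a,xy) = μ_P(a,x) = μ_P(a,y)`; and if `a ⪯ b` with
`a, b ≠ xy` then `μ_{P'}(a,b) = μ_P(a,b)`. -/
theorem zipped_moebius_below {α : Type*} [PartialOrder α] [Finite α]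
    (x y z : α) (hzip : IsZipper x y z)
    (μP : α → α → ℤ) (hμP : IsMoebius (· ≤ · : α → α → Prop) μP)
    (μ' : ZipCarrier α x y z → ZipCarrier α x y z → ℤ)
    (hμ' : IsMoebius (zipLE x y z) μ') :
    (∀ a : {p : α // p ≠ x ∧ p ≠ y ∧ p ≠ z},
      zipLE x y z (Sum.inl a) (Sum.inr ()) →
        μ' (Sum.inl a) (Sum.inr ()) = μP a.val x ∧ μP a.val x = μP a.val y) ∧
    (∀ a b : {p : α // p ≠ x ∧ p ≠ y ∧ p ≠ z},
      zipLE x y z (Sum.inl a) (Sum.inl b) →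
        μ' (Sum.inl a) (Sum.inl b) = μP a.val b.val) := by
  haveI := Fintype.ofFinite α
  obtain ⟨hxy, hxz, hyz, hcx, hcy, hcov, hlub, hD⟩ := hzip
  haveI : IsStronglyCoatomic α := IsStronglyCoatomic.of_wellFounded_gt wellFounded_gt
  have hnxy : ¬ x ≤ y := fun h => absurd ((hD x).mpr (h.lt_of_ne hxy)) (lt_irrefl x)
  have hnyx : ¬ y ≤ x := fun h => absurd ((hD y).mp (h.lt_of_ne hxy.symm)) (lt_irrefl y)
  have hltz : ∀ c : α, c < z → c ≤ x ∨ c ≤ y := by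
    intro c hc
    obtain ⟨w, hcw, hwz⟩ := exists_le_covBy_of_lt hc
    rcases hcov w hwz with rfl | rfl
    · exact Or.inl hcw
    · exact Or.inr hcw
  have hxiffy : ∀ a : α, a ≠ x → a ≠ y → (a ≤ x ↔ a ≤ y) := by
    intro a hax hay
    constructor
    · intro h; exact ((hD a).mp (h.lt_of_ne hax)).le
    · intro h; exact ((hD a).mpr (h.lt_of_ne hay)).le
  have hazx : ∀ a : α, a ≠ x → a ≠ y → a ≠ z → a ≤ z → a ≤ x := by
    intro a h1 h2 h3 h
    rcases hltz a (h.lt_of_ne h3) with h' | h'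
    · exact h'
    · exact (hxiffy a h1 h2).mpr h'
  have hzleb : ∀ b : α, x ≤ b → y ≤ b → z ≤ b := by
    intro b h1 h2
    refine hlub.2 ?_
    rintro w (rfl | rfl)
    · exact h1
    · exact h2
  -- μP a x as negative sum over strict interval
  have hmux : ∀ a : α, a < x → μP a x = - ∑ c ∈ Finset.univ.filter (fun c => a ≤ c ∧ c < x), μP a c := by
    intro a hax
    have h := zipped_moeb_sum _ _ hμP a x hax.le
    rw [if_neg hax.ne] at h
    have hx : x ∈ Finset.univ.filter (fun c => a ≤ c ∧ c ≤ x) := by simp [hax.le]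
    rw [← Finset.add_sum_erase _ _ hx] at h
    have he : (Finset.univ.filter (fun c => a ≤ c ∧ c ≤ x)).erase x
        = Finset.univ.filter (fun c => a ≤ c ∧ c < x) := by
      ext c
      simp only [Finset.mem_erase, Finset.mem_filter, Finset.mem_univ, true_and]
      constructor
      · rintro ⟨hne, hac, hcx'⟩; exact ⟨hac, hcx'.lt_of_ne hne⟩
      · rintro ⟨hac, hlt⟩; exact ⟨hlt.ne, hac, hlt.le⟩
    rw [he] at h
    linarith only [h]
  have hmuy : ∀ a : α, a < y → μP a y = - ∑ c ∈ Finset.univ.filter (fun c => a ≤ c ∧ c < y), μP a c := by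
    intro a hay
    have h := zipped_moeb_sum _ _ hμP a y hay.le
    rw [if_neg hay.ne] at h
    have hy : y ∈ Finset.univ.filter (fun c => a ≤ c ∧ c ≤ y) := by simp [hay.le]
    rw [← Finset.add_sum_erase _ _ hy] at h
    have he : (Finset.univ.filter (fun c => a ≤ c ∧ c ≤ y)).erase y
        = Finset.univ.filter (fun c => a ≤ c ∧ c < y) := by
      ext c
      simp only [Finset.mem_erase, Finset.mem_filter, Finset.mem_univ, true_and]
      constructor
      · rintro ⟨hne, hac, hcy'⟩; exact ⟨hac, hcy'.lt_of_ne hne⟩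
      · rintro ⟨hac, hlt⟩; exact ⟨hlt.ne, hac, hlt.le⟩
    rw [he] at h
    linarith only [h]
  have hL1 : ∀ a : α, a < x → μP a x = μP a y := by
    intro a hax
    have hay := (hD a).mp hax
    rw [hmux a hax, hmuy a hay]
    congr 1
    apply Finset.sum_congr _ (fun _ _ => rfl)
    ext c
    simp [hD c]
  have hL2 : ∀ a : α, a ≠ x → a ≠ y → a ≠ z → a ≤ x → μP a z = - μP a x := by
    intro a hax hay haz h
    have hax' : a < x := h.lt_of_ne hax
    have hay' : a < y := (hD a).mp hax'
    have haz' : a < z := hax'.trans hcx.lt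
    have h0 := zipped_moeb_sum _ _ hμP a z haz'.le
    rw [if_neg haz'.ne] at h0
    have hz : z ∈ Finset.univ.filter (fun c => a ≤ c ∧ c ≤ z) := by simp [haz'.le]
    rw [← Finset.add_sum_erase _ _ hz] at h0
    have he : (Finset.univ.filter (fun c => a ≤ c ∧ c ≤ z)).erase z
        = Finset.univ.filter (fun c => a ≤ c ∧ c < z) := by
      ext c
      simp only [Finset.mem_erase, Finset.mem_filter, Finset.mem_univ, true_and]
      constructor
      · rintro ⟨hne, hac, hcz⟩; exact ⟨hac, hcz.lt_of_ne hne⟩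
      · rintro ⟨hac, hlt⟩; exact ⟨hlt.ne, hac, hlt.le⟩
    rw [he] at h0
    have hunion : Finset.univ.filter (fun c => a ≤ c ∧ c < z)
        = Finset.univ.filter (fun c => a ≤ c ∧ c ≤ x) ∪ Finset.univ.filter (fun c => a ≤ c ∧ c ≤ y) := by
      ext c
      simp only [Finset.mem_union, Finset.mem_filter, Finset.mem_univ, true_and]
      constructor
      · rintro ⟨h1, h2⟩
        rcases hltz c h2 with h' | h'
        · exact Or.inl ⟨h1, h'⟩
        · exact Or.inr ⟨h1, h'⟩
      · rintro (⟨h1, h2⟩ | ⟨h1, h2⟩)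
        · exact ⟨h1, h2.trans_lt hcx.lt⟩
        · exact ⟨h1, h2.trans_lt hcy.lt⟩
    have hinter : Finset.univ.filter (fun c => a ≤ c ∧ c ≤ x) ∩ Finset.univ.filter (fun c => a ≤ c ∧ c ≤ y)
        = Finset.univ.filter (fun c => a ≤ c ∧ c < x) := by
      ext c
      simp only [Finset.mem_inter, Finset.mem_filter, Finset.mem_univ, true_and]
      constructor
      · rintro ⟨⟨h1, h2⟩, ⟨-, h3⟩⟩
        refine ⟨h1, h2.lt_of_ne ?_⟩
        rintro rfl; exact hnxy h3
      · rintro ⟨h1, h2⟩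
        exact ⟨⟨h1, h2.le⟩, ⟨h1, ((hD c).mp h2).le⟩⟩
    have hsx := zipped_moeb_sum _ _ hμP a x hax'.le
    rw [if_neg hax] at hsx
    have hsy := zipped_moeb_sum _ _ hμP a y hay'.le
    rw [if_neg hay] at hsy
    have hIE := Finset.sum_union_inter (s₁ := Finset.univ.filter (fun c => a ≤ c ∧ c ≤ x))
      (s₂ := Finset.univ.filter (fun c => a ≤ c ∧ c ≤ y)) (f := μP a)
    rw [hinter] at hIE
    rw [hunion] at h0
    have hmx := hmux a hax'
    linarith only [h0, hIE, hsx, hsy, hmx]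

  have P1 : ∀ (a : α) (ha : a ≠ x ∧ a ≠ y ∧ a ≠ z) (b : α), a ≤ b →
      ∀ (hb : b ≠ x ∧ b ≠ y ∧ b ≠ z),
      μ' (Sum.inl ⟨a, ha⟩) (Sum.inl ⟨b, hb⟩) = μP a b := by
    intro a ha b
    refine WellFounded.induction (C := fun b => a ≤ b → ∀ hb : b ≠ x ∧ b ≠ y ∧ b ≠ z,
      μ' (Sum.inl ⟨a, ha⟩) (Sum.inl ⟨b, hb⟩) = μP a b) wellFounded_lt b ?_
    clear b
    intro b IH hab hb
    have h1 := zipped_moeb_sum (zipLE x y z) μ' hμ' (Sum.inl ⟨a, ha⟩) (Sum.inl ⟨b, hb⟩) hab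
    have hBmem : @Membership.mem (ZipCarrier α x y z) _ _
        (Finset.univ.filter (fun c' => zipLE x y z (Sum.inl ⟨a, ha⟩) c' ∧
          zipLE x y z c' (Sum.inl ⟨b, hb⟩))) (Sum.inl ⟨b, hb⟩) :=
      Finset.mem_filter.mpr ⟨Finset.mem_univ _, hab, le_refl b⟩
    rw [← Finset.add_sum_erase (ι := ZipCarrier α x y z) _ _ hBmem] at h1
    have h2 := zipped_moeb_sum _ _ hμP a b hab
    have hbmem : b ∈ Finset.univ.filter (fun c => a ≤ c ∧ c ≤ b) := by simp [hab]
    rw [← Finset.add_sum_erase _ _ hbmem] at h2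
    have hif : (if @Eq (ZipCarrier α x y z) (Sum.inl ⟨a, ha⟩) (Sum.inl ⟨b, hb⟩) then (1:ℤ) else 0)
        = if a = b then 1 else 0 := by
      by_cases h : a = b
      · subst h; exact (if_pos rfl).trans (if_pos rfl).symm
      · rw [if_neg h, if_neg ?_]
        intro heq
        exact h (congrArg (fun w => Sum.elim Subtype.val (fun _ => x) w) heq)
    rw [hif] at h1
    have hgen : ∑ c' ∈ ((Finset.univ.filter (fun c' => zipLE x y z (Sum.inl ⟨a, ha⟩) c' ∧
          zipLE x y z c' (Sum.inl ⟨b, hb⟩))).erase (Sum.inl ⟨b, hb⟩)).erase (Sum.inr ()),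
          μ' (Sum.inl ⟨a, ha⟩) c'
        = ∑ c ∈ Finset.univ.filter (fun c => (a ≤ c ∧ c ≤ b ∧ c ≠ b) ∧ (c ≠ x ∧ c ≠ y ∧ c ≠ z)),
          μP a c := by
      refine (Finset.sum_bij (fun c hc => Sum.inl ⟨c, (Finset.mem_filter.mp hc).2.2⟩)
        ?_ ?_ ?_ ?_).symm
      · intro c hc
        obtain ⟨-, ⟨hac, hcb, hcbne⟩, -⟩ := Finset.mem_filter.mp hc
        exact (Finset.mem_erase (α := ZipCarrier α x y z)).mpr ⟨fun h => Sum.inl_ne_inr h, (Finset.mem_erase (α := ZipCarrier α x y z)).mpr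
          ⟨fun h => hcbne (congrArg (Sum.elim Subtype.val fun _ => x) h),
            (Finset.mem_filter (α := ZipCarrier α x y z)).mpr ⟨Finset.mem_univ _, hac, hcb⟩⟩⟩
      · intro c1 h1' c2 h2' he
        exact congrArg (Sum.elim Subtype.val fun _ => x) he
      · intro c' hc'
        obtain ⟨hner, hc'⟩ := (Finset.mem_erase (α := ZipCarrier α x y z)).mp hc'
        obtain ⟨hneB, hc'⟩ := (Finset.mem_erase (α := ZipCarrier α x y z)).mp hc'
        obtain ⟨-, hr1, hr2⟩ := (Finset.mem_filter (α := ZipCarrier α x y z)).mp hc'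
        obtain (⟨c, hcp⟩ | u) := c'
        · refine ⟨c, ?_, rfl⟩
          simp only [Finset.mem_filter, Finset.mem_univ, true_and]
          exact ⟨⟨hr1, hr2, fun hcb => hneB (by subst hcb; rfl)⟩, hcp⟩
        · cases u; exact absurd rfl hner
      · intro c hc
        obtain ⟨-, ⟨hac, hcb, hcbne⟩, hprops⟩ := Finset.mem_filter.mp hc
        exact (IH c (hcb.lt_of_ne hcbne) hac hprops).symm
    by_cases hinr : a ≤ x ∧ (x ≤ b ∨ y ≤ b)
    · obtain ⟨haxle, hxyb⟩ := hinr
      have hax' : a < x := haxle.lt_of_ne ha.1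
      have hay' : a < y := (hD a).mp hax'
      have hcb' : ∀ c : α, c < x → c < b := by
        intro c hcx'
        rcases hxyb with h | h
        · exact hcx'.trans_le h
        · exact ((hD c).mp hcx').trans_le h
      have hALinr : μ' (Sum.inl ⟨a, ha⟩) (Sum.inr ()) = μP a x := by
        have h3 := zipped_moeb_sum (zipLE x y z) μ' hμ' (Sum.inl ⟨a, ha⟩) (Sum.inr ()) haxle
        have hne3 : ¬ @Eq (ZipCarrier α x y z) (Sum.inl ⟨a, ha⟩) (Sum.inr ()) :=
          fun h => Sum.inl_ne_inr h
        rw [if_neg hne3] at h3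
        have hrmem : @Membership.mem (ZipCarrier α x y z) _ _ (
            Finset.univ.filter (fun c' => zipLE x y z (Sum.inl ⟨a, ha⟩) c' ∧
              zipLE x y z c' (Sum.inr ()))) (Sum.inr ()) :=
          Finset.mem_filter.mpr ⟨Finset.mem_univ _, haxle, trivial⟩
        rw [← Finset.add_sum_erase (ι := ZipCarrier α x y z) _ _ hrmem] at h3
        have hgx : ∑ c' ∈ (Finset.univ.filter (fun c' => zipLE x y z (Sum.inl ⟨a, ha⟩) c' ∧
              zipLE x y z c' (Sum.inr ()))).erase (Sum.inr ()), μ' (Sum.inl ⟨a, ha⟩) c'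
            = ∑ c ∈ Finset.univ.filter (fun c => a ≤ c ∧ c < x), μP a c := by
          refine (Finset.sum_bij (fun c hc => Sum.inl ⟨c, by
            obtain ⟨-, -, h2'⟩ := Finset.mem_filter.mp hc
            refine ⟨h2'.ne, ?_, ?_⟩
            · rintro rfl; exact hnyx h2'.le
            · rintro rfl; exact absurd h2' (lt_asymm hcx.lt)⟩) ?_ ?_ ?_ ?_).symm
          · intro c hc
            obtain ⟨-, hac, hlt⟩ := Finset.mem_filter.mp hc
            exact (Finset.mem_erase (α := ZipCarrier α x y z)).mpr ⟨fun h => Sum.inl_ne_inr h,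
              (Finset.mem_filter (α := ZipCarrier α x y z)).mpr ⟨Finset.mem_univ _, hac, hlt.le⟩⟩
          · intro c1 h1' c2 h2' he
            exact congrArg (Sum.elim Subtype.val fun _ => x) he
          · intro c' hc'
            obtain ⟨hner, hc'⟩ := (Finset.mem_erase (α := ZipCarrier α x y z)).mp hc'
            obtain ⟨-, hr1, hr2⟩ := (Finset.mem_filter (α := ZipCarrier α x y z)).mp hc'
            obtain (⟨c, hcp⟩ | u) := c'
            · refine ⟨c, ?_, rfl⟩
              simp only [Finset.mem_filter, Finset.mem_univ, true_and]
              exact ⟨hr1, hr2.lt_of_ne hcp.1⟩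
            · cases u; exact absurd rfl hner
          · intro c hc
            obtain ⟨-, hac, hlt⟩ := Finset.mem_filter.mp hc
            exact (IH c (hcb' c hlt) hac _).symm
        rw [hgx] at h3
        linarith only [h3, hmux a hax']
      have hrmem2 : @Membership.mem (ZipCarrier α x y z) _ _
          ((Finset.univ.filter (fun c' => zipLE x y z (Sum.inl ⟨a, ha⟩) c' ∧
            zipLE x y z c' (Sum.inl ⟨b, hb⟩))).erase (Sum.inl ⟨b, hb⟩)) (Sum.inr ()) :=
        by
          exact Finset.mem_erase.mpr ⟨fun h => Sum.inr_ne_inl h,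
            Finset.mem_filter.mpr ⟨Finset.mem_univ _, haxle, hxyb⟩⟩
      rw [← Finset.add_sum_erase (ι := ZipCarrier α x y z) _ _ hrmem2] at h1
      rw [hgen, hALinr] at h1
      have hsplit : ∑ c ∈ (Finset.univ.filter (fun c => a ≤ c ∧ c ≤ b)).erase b, μP a c
          = μP a x + ∑ c ∈ Finset.univ.filter
            (fun c => (a ≤ c ∧ c ≤ b ∧ c ≠ b) ∧ (c ≠ x ∧ c ≠ y ∧ c ≠ z)), μP a c := by
        by_cases hxb : x ≤ b
        · by_cases hyb : y ≤ b
          · have hzb : z ≤ b := hzleb b hxb hyb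
            have hx1 : x ∈ (Finset.univ.filter (fun c => a ≤ c ∧ c ≤ b)).erase b :=
              by
                simp only [Finset.mem_erase, Finset.mem_filter, Finset.mem_univ, true_and]
                exact ⟨Ne.symm hb.1, haxle, hxb⟩
            rw [← Finset.add_sum_erase _ _ hx1]
            have hy1 : y ∈ ((Finset.univ.filter (fun c => a ≤ c ∧ c ≤ b)).erase b).erase x :=
              by
                simp only [Finset.mem_erase, Finset.mem_filter, Finset.mem_univ, true_and]
                exact ⟨Ne.symm hxy, Ne.symm hb.2.1, hay'.le, hyb⟩
            rw [← Finset.add_sum_erase _ _ hy1]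
            have hz1 : z ∈ (((Finset.univ.filter (fun c => a ≤ c ∧ c ≤ b)).erase b).erase x).erase y :=
              by
                simp only [Finset.mem_erase, Finset.mem_filter, Finset.mem_univ, true_and]
                exact ⟨Ne.symm hyz, Ne.symm hxz, Ne.symm hb.2.2, haxle.trans hcx.le, hzb⟩
            rw [← Finset.add_sum_erase _ _ hz1]
            have herest : ((((Finset.univ.filter (fun c => a ≤ c ∧ c ≤ b)).erase b).erase x).erase y).erase z
                = Finset.univ.filter (fun c => (a ≤ c ∧ c ≤ b ∧ c ≠ b) ∧ (c ≠ x ∧ c ≠ y ∧ c ≠ z)) := by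
              ext c
              simp only [Finset.mem_erase, Finset.mem_filter, Finset.mem_univ, true_and]
              tauto
            rw [herest]
            have := hL1 a hax'
            have := hL2 a ha.1 ha.2.1 ha.2.2 haxle
            ring_nf
            linarith only [this, hL1 a hax', hL2 a ha.1 ha.2.1 ha.2.2 haxle]
          · have hx1 : x ∈ (Finset.univ.filter (fun c => a ≤ c ∧ c ≤ b)).erase b :=
              by
                simp only [Finset.mem_erase, Finset.mem_filter, Finset.mem_univ, true_and]
                exact ⟨Ne.symm hb.1, haxle, hxb⟩
            rw [← Finset.add_sum_erase _ _ hx1]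
            have herest : ((Finset.univ.filter (fun c => a ≤ c ∧ c ≤ b)).erase b).erase x
                = Finset.univ.filter (fun c => (a ≤ c ∧ c ≤ b ∧ c ≠ b) ∧ (c ≠ x ∧ c ≠ y ∧ c ≠ z)) := by
              ext c
              simp only [Finset.mem_erase, Finset.mem_filter, Finset.mem_univ, true_and]
              constructor
              · rintro ⟨h1', h2', h3', h4'⟩
                refine ⟨⟨h3', h4', h2'⟩, h1', ?_, ?_⟩
                · rintro rfl; exact hyb h4'
                · rintro rfl; exact hyb (hcy.le.trans h4')
              · rintro ⟨⟨h3', h4', h2'⟩, h1', -, -⟩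
                exact ⟨h1', h2', h3', h4'⟩
            rw [herest]
        · by_cases hyb : y ≤ b
          · have hy1 : y ∈ (Finset.univ.filter (fun c => a ≤ c ∧ c ≤ b)).erase b :=
              by
                simp only [Finset.mem_erase, Finset.mem_filter, Finset.mem_univ, true_and]
                exact ⟨Ne.symm hb.2.1, hay'.le, hyb⟩
            rw [← Finset.add_sum_erase _ _ hy1]
            have herest : ((Finset.univ.filter (fun c => a ≤ c ∧ c ≤ b)).erase b).erase y
                = Finset.univ.filter (fun c => (a ≤ c ∧ c ≤ b ∧ c ≠ b) ∧ (c ≠ x ∧ c ≠ y ∧ c ≠ z)) := by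
              ext c
              simp only [Finset.mem_erase, Finset.mem_filter, Finset.mem_univ, true_and]
              constructor
              · rintro ⟨h1', h2', h3', h4'⟩
                refine ⟨⟨h3', h4', h2'⟩, ?_, h1', ?_⟩
                · rintro rfl; exact hxb h4'
                · rintro rfl; exact hxb (hcx.le.trans h4')
              · rintro ⟨⟨h3', h4', h2'⟩, -, h1', -⟩
                exact ⟨h1', h2', h3', h4'⟩
            rw [herest, hL1 a hax']
          · rcases hxyb with h | h
            · exact absurd h hxb
            · exact absurd h hyb
      rw [hsplit] at h2
      linarith only [h1, h2]
    · have hnr : ¬ @Membership.mem (ZipCarrier α x y z) _ _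
          ((Finset.univ.filter (fun c' => zipLE x y z (Sum.inl ⟨a, ha⟩) c' ∧
            zipLE x y z c' (Sum.inl ⟨b, hb⟩))).erase (Sum.inl ⟨b, hb⟩)) (Sum.inr ()) := by
        intro hm
        obtain ⟨-, hq1, hq2⟩ := Finset.mem_filter.mp (Finset.mem_erase.mp hm).2
        exact hinr ⟨hq1, hq2⟩
      rw [← Finset.erase_eq_of_notMem (α := ZipCarrier α x y z) hnr, hgen] at h1
      have hFeq : (Finset.univ.filter (fun c => a ≤ c ∧ c ≤ b)).erase b
          = Finset.univ.filter (fun c => (a ≤ c ∧ c ≤ b ∧ c ≠ b) ∧ (c ≠ x ∧ c ≠ y ∧ c ≠ z)) := by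
        ext c
        simp only [Finset.mem_erase, Finset.mem_filter, Finset.mem_univ, true_and]
        constructor
        · rintro ⟨h1', h2', h3'⟩
          refine ⟨⟨h2', h3', h1'⟩, ?_, ?_, ?_⟩
          · rintro rfl; exact hinr ⟨h2', Or.inl h3'⟩
          · rintro rfl; exact hinr ⟨(hxiffy a ha.1 ha.2.1).mpr h2', Or.inr h3'⟩
          · rintro rfl; exact hinr ⟨hazx a ha.1 ha.2.1 ha.2.2 h2', Or.inl (hcx.le.trans h3')⟩
        · rintro ⟨⟨h2', h3', h1'⟩, -⟩
          exact ⟨h1', h2', h3'⟩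
      rw [hFeq] at h2
      linarith only [h1, h2]

  have Linr : ∀ (a : α) (ha : a ≠ x ∧ a ≠ y ∧ a ≠ z), a ≤ x →
      μ' (Sum.inl ⟨a, ha⟩) (Sum.inr ()) = μP a x := by
    intro a ha haxle
    have hax' : a < x := haxle.lt_of_ne ha.1
    have h3 := zipped_moeb_sum (zipLE x y z) μ' hμ' (Sum.inl ⟨a, ha⟩) (Sum.inr ()) haxle
    have hne3 : ¬ @Eq (ZipCarrier α x y z) (Sum.inl ⟨a, ha⟩) (Sum.inr ()) :=
      fun h => Sum.inl_ne_inr h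
    rw [if_neg hne3] at h3
    have hrmem : @Membership.mem (ZipCarrier α x y z) _ _ (
        Finset.univ.filter (fun c' => zipLE x y z (Sum.inl ⟨a, ha⟩) c' ∧
          zipLE x y z c' (Sum.inr ()))) (Sum.inr ()) :=
      Finset.mem_filter.mpr ⟨Finset.mem_univ _, haxle, trivial⟩
    rw [← Finset.add_sum_erase (ι := ZipCarrier α x y z) _ _ hrmem] at h3
    have hgx : ∑ c' ∈ (Finset.univ.filter (fun c' => zipLE x y z (Sum.inl ⟨a, ha⟩) c' ∧
          zipLE x y z c' (Sum.inr ()))).erase (Sum.inr ()), μ' (Sum.inl ⟨a, ha⟩) c'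
        = ∑ c ∈ Finset.univ.filter (fun c => a ≤ c ∧ c < x), μP a c := by
      refine (Finset.sum_bij (fun c hc => Sum.inl ⟨c, by
        obtain ⟨-, -, h2'⟩ := Finset.mem_filter.mp hc
        refine ⟨h2'.ne, ?_, ?_⟩
        · rintro rfl; exact hnyx h2'.le
        · rintro rfl; exact absurd h2' (lt_asymm hcx.lt)⟩) ?_ ?_ ?_ ?_).symm
      · intro c hc
        obtain ⟨-, hac, hlt⟩ := Finset.mem_filter.mp hc
        exact (Finset.mem_erase (α := ZipCarrier α x y z)).mpr ⟨fun h => Sum.inl_ne_inr h,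
          (Finset.mem_filter (α := ZipCarrier α x y z)).mpr ⟨Finset.mem_univ _, hac, hlt.le⟩⟩
      · intro c1 h1' c2 h2' he
        exact congrArg (Sum.elim Subtype.val fun _ => x) he
      · intro c' hc'
        obtain ⟨hner, hc'⟩ := (Finset.mem_erase (α := ZipCarrier α x y z)).mp hc'
        obtain ⟨-, hr1, hr2⟩ := (Finset.mem_filter (α := ZipCarrier α x y z)).mp hc'
        obtain (⟨c, hcp⟩ | u) := c'
        · refine ⟨c, ?_, rfl⟩
          simp only [Finset.mem_filter, Finset.mem_univ, true_and]
          exact ⟨hr1, hr2.lt_of_ne hcp.1⟩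
        · cases u; exact absurd rfl hner
      · intro c hc
        obtain ⟨-, hac, hlt⟩ := Finset.mem_filter.mp hc
        exact (P1 a ha c hac _).symm
    rw [hgx] at h3
    linarith only [h3, hmux a hax']
  constructor
  · rintro ⟨a, ha⟩ h
    have haxle : a ≤ x := h
    exact ⟨Linr a ha haxle, hL1 a (haxle.lt_of_ne ha.1)⟩
  · rintro ⟨a, ha⟩ ⟨b, hb⟩ h
    exact P1 a ha b h hb
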